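/- arXiv:2310.20013 — 2 statements merged into one kernel-verified Lean document; each statement's English description precedes it below -/
import Mathlib

section
/- Let m > 1 and let f : ℝ → ℝ be continuous with f(s)/(|s|^{m−2}s) → +∞ as s → +∞ and as s → −∞. Define F(s) = ∫₀^s f(t) dt. Then F is bounded below: there exists M ≥ 0 such that F(s) ≥ −M for all s ∈ ℝ. -/
open Filter Topology

theorem statement14 (m : ℝ) (hm : 1 < m) (f : ℝ → ℝ) (hf : Continuous f)
    (htop : Tendsto (fun s : ℝ => f s / (|s| ^ (m - 2) * s)) atTop atTop)
    (hbot : Tendsto (fun s : ℝ => f s / (|s| ^ (m - 2) * s)) atBot atTop)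
    (F : ℝ → ℝ) (hF : ∀ s : ℝ, F s = ∫ t in (0:ℝ)..s, f t) :
    ∃ M : ℝ, 0 ≤ M ∧ ∀ s : ℝ, -M ≤ F s := by
  obtain ⟨A₀, hA₀⟩ := eventually_atTop.mp (htop.eventually_ge_atTop 1)
  obtain ⟨B₀, hB₀⟩ := eventually_atBot.mp (hbot.eventually_ge_atTop 1)
  set A : ℝ := max A₀ 1 with hA
  set B : ℝ := min B₀ (-1) with hB
  have hA1 : (1 : ℝ) ≤ A := le_max_right _ _
  have hB1 : B ≤ -1 := min_le_right _ _
  have hfpos : ∀ s, A ≤ s → 0 ≤ f s := by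
    intro s hs
    have hs1 : (1 : ℝ) ≤ s := le_trans hA1 hs
    have habs : (0 : ℝ) < |s| := abs_pos.mpr (by linarith)
    have hd : 0 < |s| ^ (m - 2) * s :=
      mul_pos (Real.rpow_pos_of_pos habs _) (by linarith)
    have h1 := hA₀ s (le_trans (le_max_left _ _) hs)
    have := (one_le_div hd).mp h1
    linarith
  have hfneg : ∀ s, s ≤ B → f s ≤ 0 := by
    intro s hs
    have hs1 : s ≤ -1 := le_trans hs hB1
    have habs : (0 : ℝ) < |s| := abs_pos.mpr (by linarith)
    have hd : |s| ^ (m - 2) * s < 0 :=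
      mul_neg_of_pos_of_neg (Real.rpow_pos_of_pos habs _) (by linarith)
    have h1 := hB₀ s (le_trans hs (min_le_left _ _))
    have h2 : f s ≤ 1 * (|s| ^ (m - 2) * s) := (le_div_iff_of_neg hd).mp h1
    nlinarith
  have hFc : Continuous F := by
    have := intervalIntegral.continuous_primitive
      (fun a b => hf.intervalIntegrable a b) (0 : ℝ) (μ := MeasureTheory.volume)
    have heq : F = fun s => ∫ t in (0:ℝ)..s, f t := funext hF
    rw [heq]; exact this
  have hBA : B ≤ A := by linarith
  obtain ⟨x₀, hx₀mem, hx₀⟩ := isCompact_Icc.exists_isMinOn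
    (Set.nonempty_Icc.2 hBA) hFc.continuousOn
  refine ⟨max 0 (-(F x₀)), le_max_left _ _, fun s => ?_⟩
  have key : F x₀ ≤ F s := by
    rcases le_or_gt s B with hsB | hsB
    · have hsplit : (∫ t in (0:ℝ)..B, f t) + ∫ t in B..s, f t = ∫ t in (0:ℝ)..s, f t :=
        intervalIntegral.integral_add_adjacent_intervals
          (hf.intervalIntegrable 0 B) (hf.intervalIntegrable B s)
      have hrev : (∫ t in B..s, f t) = -∫ t in s..B, f t :=
        (intervalIntegral.integral_symm s B)
      have hnp : (∫ t in s..B, f t) ≤ 0 := by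
        have h := intervalIntegral.integral_nonneg (μ := MeasureTheory.volume)
          (f := fun t => -f t) hsB (fun t ht => neg_nonneg.mpr (hfneg t ht.2))
        rw [intervalIntegral.integral_neg] at h
        linarith
      have hFx₀B : F x₀ ≤ F B := hx₀ (⟨le_refl _, hBA⟩ : B ∈ Set.Icc B A)
      have : F B ≤ F s := by
        rw [hF, hF]
        linarith [hsplit, hrev]
      linarith
    rcases le_or_gt s A with hsA | hsA
    · exact hx₀ (⟨le_of_lt hsB, hsA⟩ : s ∈ Set.Icc B A)
    · have hsplit : (∫ t in (0:ℝ)..A, f t) + ∫ t in A..s, f t = ∫ t in (0:ℝ)..s, f t :=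
        intervalIntegral.integral_add_adjacent_intervals
          (hf.intervalIntegrable 0 A) (hf.intervalIntegrable A s)
      have hnn : 0 ≤ ∫ t in A..s, f t :=
        intervalIntegral.integral_nonneg (le_of_lt hsA) (fun t ht => hfpos t ht.1)
      have hFx₀A : F x₀ ≤ F A := hx₀ (⟨hBA, le_refl _⟩ : A ∈ Set.Icc B A)
      have : F A ≤ F s := by rw [hF, hF]; linarith
      linarith
  linarith [le_max_right 0 (-(F x₀))]
end

section
/- Let m > 1 and let f : ℝ → ℝ be a function such that the map s ↦ f(s)/|s|^{m−1} is strictly increasing on (−∞, 0) and strictly increasing on (0, +∞). Then for every t ∈ (0,1) and every u ∈ ℝ one has f(tu)·u ≤ t^{m−1} f(u)·u. (In the paper this is relation (4.1), where m = qϑ and f satisfies hypothesis (H3)(v).) -/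
open Set

theorem statement17 (m : ℝ) (hm : 1 < m) (f : ℝ → ℝ)
    (hneg : StrictMonoOn (fun s : ℝ => f s / |s| ^ (m - 1)) (Iio 0))
    (hpos : StrictMonoOn (fun s : ℝ => f s / |s| ^ (m - 1)) (Ioi 0)) :
    ∀ t ∈ Ioo (0:ℝ) 1, ∀ u : ℝ, f (t * u) * u ≤ t ^ (m - 1) * (f u * u) := by
  rintro t ⟨ht0, ht1⟩ u
  have htp : (0:ℝ) < t ^ (m - 1) := Real.rpow_pos_of_pos ht0 _
  rcases lt_trichotomy u 0 with hu | hu | hu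
  · have htu : t * u < 0 := mul_neg_of_pos_of_neg ht0 hu
    have h := hneg (mem_Iio.2 hu) (mem_Iio.2 htu) (by nlinarith)
    simp only at h
    have habs : |t * u| ^ (m-1) = t ^ (m-1) * |u| ^ (m-1) := by
      rw [abs_mul, abs_of_pos ht0, Real.mul_rpow ht0.le (abs_nonneg u)]
    have hup : (0:ℝ) < |u| ^ (m-1) := Real.rpow_pos_of_pos (abs_pos.2 hu.ne) _
    rw [habs, div_lt_div_iff₀ hup (by positivity)] at h
    nlinarith [mul_pos htp hup]
  · simp [hu]
  · have htu : 0 < t * u := mul_pos ht0 hu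
    have h := hpos (mem_Ioi.2 htu) (mem_Ioi.2 hu) (by nlinarith)
    simp only at h
    have habs : |t * u| ^ (m-1) = t ^ (m-1) * |u| ^ (m-1) := by
      rw [abs_mul, abs_of_pos ht0, Real.mul_rpow ht0.le (abs_nonneg u)]
    have hup : (0:ℝ) < |u| ^ (m-1) := Real.rpow_pos_of_pos (abs_pos.2 hu.ne') _
    rw [habs, div_lt_div_iff₀ (by positivity) hup] at h
    nlinarith [mul_pos htp hup]
end
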